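/- Let μ be a Borel probability measure on a real Banach space, and let A be a closed, symmetric, convex set with μ(A) > 0 and μ(∂A) = 0. Then there exists ε > 0 such that the ball B(0, ε) is contained in A. -/

import Mathlib

open MeasureTheory

/-- If `μ` is a Borel probability measure on a real Banach space and `A`
is a closed, symmetric, convex set with `μ(A) > 0` and `μ(∂A) = 0`, then there is
`ε > 0` with `B(0, ε) ⊆ A`. -/
theorem stmt_2 {Ω : Type*} [NormedAddCommGroup Ω] [NormedSpace ℝ Ω] [CompleteSpace Ω]
    [MeasurableSpace Ω] [BorelSpace Ω]
    (μ : Measure Ω) [IsProbabilityMeasure μ]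
    (A : Set Ω) (hclosed : IsClosed A) (hconv : Convex ℝ A) (hsym : A = -A)
    (hpos : 0 < μ A) (hbd : μ (frontier A) = 0) :
    ∃ ε > 0, Metric.ball (0 : Ω) ε ⊆ A := by
  -- A ⊆ interior A ∪ frontier A
  have hsub : A ⊆ interior A ∪ frontier A := by
    intro x hx
    rw [frontier, hclosed.closure_eq]
    by_cases h : x ∈ interior A
    · exact Or.inl h
    · exact Or.inr ⟨hx, h⟩
  have hintpos : 0 < μ (interior A) := by
    by_contra h
    push_neg at h
    have h0 : μ (interior A) = 0 := le_antisymm h zero_le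
    have : μ A ≤ μ (interior A) + μ (frontier A) :=
      (measure_mono hsub).trans (measure_union_le _ _)
    rw [h0, hbd, add_zero] at this
    exact absurd (le_antisymm this zero_le) hpos.ne'
  obtain ⟨x, hx⟩ := nonempty_of_measure_ne_zero hintpos.ne'
  have hnx : -x ∈ A := by
    rw [hsym]
    simpa using interior_subset hx
  have h0 : (0 : Ω) ∈ interior A := by
    have := hconv.combo_interior_self_mem_interior hx hnx
      (by norm_num : (0:ℝ) < 1/2) (by norm_num : (0:ℝ) ≤ 1/2) (by norm_num)
    simpa using this
  obtain ⟨ε, hε, hball⟩ := Metric.isOpen_iff.1 isOpen_interior 0 h0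
  exact ⟨ε, hε, hball.trans interior_subset⟩
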